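/- arXiv:1905.05379 — 3 statements merged into one kernel-verified Lean document; each statement's English description precedes it below -/
import Mathlib

section
/- Let K be a field, R a commutative ring, I ⊆ R an ideal, and suppose f ∈ R satisfies an equation of integral dependence over I: there exist N ≥ 1 and elements a_1, …, a_N ∈ R with a_j ∈ I^j for each j = 1, …, N and f^N + a_1 f^{N−1} + ⋯ + a_{N−1} f + a_N = 0. Then for every ring homomorphism γ : R → K⟦t⟧ and every natural number i, if γ maps every element of I into the ideal of K⟦t⟧ generated by t^i, then γ(f) lies in the ideal generated by t^i. -/
/-- If `f` satisfies an equation of integral dependence over the ideal `I`,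
then any ring homomorphism `γ : R → K⟦t⟧` mapping `I` into `(t^i)` maps `f` into `(t^i)`. -/
theorem statement0 (K : Type*) [Field K] (R : Type*) [CommRing R] (I : Ideal R) (f : R)
    (N : ℕ) (hN : 1 ≤ N) (a : ℕ → R) (ha : ∀ j, 1 ≤ j → j ≤ N → a j ∈ I ^ j)
    (heq : f ^ N + ∑ j ∈ Finset.Icc 1 N, a j * f ^ (N - j) = 0)
    (γ : R →+* PowerSeries K) (i : ℕ)
    (hγ : ∀ x ∈ I, γ x ∈ Ideal.span {(PowerSeries.X : PowerSeries K) ^ i}) :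
    γ f ∈ Ideal.span {(PowerSeries.X : PowerSeries K) ^ i} := by
  classical
  set g : PowerSeries K := γ f with hg
  rw [Ideal.mem_span_singleton]
  by_contra hdvd
  -- get minimal m with coeff m g ≠ 0; necessarily m < i
  rw [PowerSeries.X_pow_dvd_iff] at hdvd
  push_neg at hdvd
  obtain ⟨m₀, hm₀i, hm₀⟩ := hdvd
  have hex : ∃ m, PowerSeries.coeff (R := K) m g ≠ 0 := ⟨m₀, hm₀⟩
  set m := Nat.find hex with hmdef
  have hm : PowerSeries.coeff (R := K) m g ≠ 0 := Nat.find_spec hex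
  have hmin : ∀ k, k < m → PowerSeries.coeff (R := K) k g = 0 := by
    intro k hk
    rw [hmdef] at hk
    exact not_not.mp (Nat.find_min hex hk)
  have hmi : m < i := lt_of_le_of_lt (Nat.find_min' hex hm₀) hm₀i
  -- g = X^m * h with constantCoeff h ≠ 0
  obtain ⟨h, hh⟩ : (PowerSeries.X : PowerSeries K) ^ m ∣ g :=
    PowerSeries.X_pow_dvd_iff.mpr fun k hk => hmin k hk
  have hc : PowerSeries.constantCoeff (R := K) h ≠ 0 := by
    intro h0
    apply hm
    rw [hh]
    have := PowerSeries.coeff_X_pow_mul h m 0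
    simpa [h0, PowerSeries.coeff_zero_eq_constantCoeff] using this
  -- coeff (N*m) of g^N is nonzero
  have hgN : PowerSeries.coeff (R := K) (N * m) (g ^ N) ≠ 0 := by
    rw [hh, mul_pow, ← pow_mul]
    have h1 : PowerSeries.coeff (R := K) (0 + N * m)
        ((PowerSeries.X : PowerSeries K) ^ (N * m) * h ^ N) = PowerSeries.coeff (R := K) 0 (h ^ N) :=
      PowerSeries.coeff_X_pow_mul _ _ _
    rw [Nat.mul_comm m N]
    simp only [Nat.zero_add] at h1
    rw [h1, PowerSeries.coeff_zero_eq_constantCoeff, map_pow]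
    exact pow_ne_zero _ hc
  -- each term is divisible by X^(N*m+1)
  have hterm : ∀ j ∈ Finset.Icc 1 N,
      (PowerSeries.X : PowerSeries K) ^ (N * m + 1) ∣ γ (a j) * g ^ (N - j) := by
    intro j hj
    rw [Finset.mem_Icc] at hj
    have haj : (PowerSeries.X : PowerSeries K) ^ (i * j) ∣ γ (a j) := by
      have h1 : γ (a j) ∈ Ideal.map γ (I ^ j) := Ideal.mem_map_of_mem γ (ha j hj.1 hj.2)
      rw [Ideal.map_pow] at h1
      have h2 : (Ideal.map γ I) ^ j ≤
          (Ideal.span {(PowerSeries.X : PowerSeries K) ^ i}) ^ j := by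
        apply Ideal.pow_right_mono
        rw [Ideal.map_le_iff_le_comap]
        intro x hx
        exact hγ x hx
      have h3 := h2 h1
      rw [Ideal.span_singleton_pow, ← pow_mul, Ideal.mem_span_singleton] at h3
      exact h3
    have hgpow : (PowerSeries.X : PowerSeries K) ^ ((N - j) * m) ∣ g ^ (N - j) := by
      rw [hh, mul_pow, ← pow_mul, Nat.mul_comm m (N - j)]
      exact Dvd.intro _ rfl
    have hdvd2 : (PowerSeries.X : PowerSeries K) ^ (i * j + (N - j) * m) ∣
        γ (a j) * g ^ (N - j) := by
      rw [pow_add]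
      exact mul_dvd_mul haj hgpow
    refine dvd_trans (pow_dvd_pow _ ?_) hdvd2
    -- N*m+1 ≤ i*j + (N-j)*m
    have hj1 := hj.1
    have hj2 := hj.2
    have key : N * m + 1 ≤ i * j + (N - j) * m := by
      have : i * j ≥ (m + 1) * j := Nat.mul_le_mul_right j (by omega)
      have h4 : (m + 1) * j + (N - j) * m = N * m + j := by
        have : j + (N - j) = N := by omega
        nlinarith [Nat.sub_add_cancel hj2]
      omega
    exact key
  -- conclude
  have hsum : (PowerSeries.X : PowerSeries K) ^ (N * m + 1) ∣ g ^ N := by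
    have h0 : g ^ N + ∑ j ∈ Finset.Icc 1 N, γ (a j) * g ^ (N - j) = 0 := by
      have := congrArg γ heq
      simpa [map_add, map_sum, map_mul, map_pow] using this
    have : g ^ N = -∑ j ∈ Finset.Icc 1 N, γ (a j) * g ^ (N - j) := by linear_combination h0
    rw [this]
    exact dvd_neg.mpr (Finset.dvd_sum hterm)
  rw [PowerSeries.X_pow_dvd_iff] at hsum
  exact hgN (hsum (N * m) (by omega))
end

section
/- Let K be a field, 1 ≤ k < m, and fix i ∈ {1,…,k} and i', j ∈ {k+1,…,m}. Set A = {1,…,k} ∪ {i'} and B = {1,…,k} ∪ {j}. Let Λ ∈ ⋀^{(k+1)²−2} Ω_{R_k/K} be the exterior product, taken in lexicographic order of the indices, of the differentials d[x_{pq}] over all pairs (p,q) ∈ A×B with (p,q) ∉ {(i,j), (i',j)}. Then there exists a sign ε ∈ {1,−1} such that [Δ_{A∖{i}, {1,…,k}}] · (Λ ∧ d[x_{ij}]) = ε · [Δ_{{1,…,k},{1,…,k}}] · (Λ ∧ d[x_{i'j}]) in ⋀^{(k+1)²−1} Ω_{R_k/K}. -/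
open MvPolynomial

/-- The `r × r` minor `Δ_{A,B}` of the generic `m × m` matrix `(x_{ij})`. -/
noncomputable def genMinor (K : Type*) [Field K] (m r : ℕ) (A B : Finset (Fin m))
    (hA : A.card = r) (hB : B.card = r) : MvPolynomial (Fin m × Fin m) K :=
  (Matrix.of fun a b : Fin r =>
    (X ((↑(A.orderIsoOfFin hA a) : Fin m), (↑(B.orderIsoOfFin hB b) : Fin m)) :
      MvPolynomial (Fin m × Fin m) K)).det

/-- The determinantal ideal `I_r`, generated by all `r × r` minors of the generic matrix. -/
noncomputable def detIdeal (K : Type*) [Field K] (m r : ℕ) :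
    Ideal (MvPolynomial (Fin m × Fin m) K) :=
  Ideal.span {p | ∃ (A B : Finset (Fin m)) (hA : A.card = r) (hB : B.card = r),
    p = genMinor K m r A B hA hB}

/-- The determinantal ring `R_k = R / I_{k+1}`. -/
noncomputable abbrev DetRing (K : Type*) [Field K] (m k : ℕ) :=
  MvPolynomial (Fin m × Fin m) K ⧸ detIdeal K m (k + 1)

set_option synthInstance.maxHeartbeats 1000000 in
/-- The exterior product, in lexicographic order over the index set `S`, of the
differentials `d[x_{ij}]`, taken in the exterior algebra of the `R_k`-module `Ω_{R_k/K}`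
(its degree-`|S|` piece is the corresponding exterior power). -/
noncomputable def dWedge (K : Type*) [Field K] (m k : ℕ) (S : Finset (Fin m × Fin m)) :
    ExteriorAlgebra (DetRing K m k) (KaehlerDifferential K (DetRing K m k)) :=
  (((S.map toLex.toEmbedding).sort (· ≤ ·)).map fun p =>
    ExteriorAlgebra.ι (DetRing K m k)
      ((KaehlerDifferential.D K (DetRing K m k))
        (Ideal.Quotient.mk (detIdeal K m (k + 1)) (X (ofLex p))))).prod

/-- The subset `{1,…,k}` of the row/column indices `{1,…,m}`. -/
def stdSet (m k : ℕ) (h : k ≤ m) : Finset (Fin m) :=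
  Finset.univ.map (Fin.castLEEmb h)

theorem stdSet_card (m k : ℕ) (h : k ≤ m) : (stdSet m k h).card = k := by
  simp [stdSet]

theorem mem_stdSet (m k : ℕ) (h : k ≤ m) (x : Fin m) : x ∈ stdSet m k h ↔ (x : ℕ) < k := by
  simp only [stdSet, Finset.mem_map, Finset.mem_univ, true_and]
  constructor
  · rintro ⟨y, rfl⟩; exact y.isLt
  · intro hx; exact ⟨⟨x, hx⟩, rfl⟩

theorem eraseCard (m k : ℕ) (h : k ≤ m) (i i' : Fin m) (hi : (i : ℕ) < k)
    (hi' : k ≤ (i' : ℕ)) : ((stdSet m k h ∪ {i'}).erase i).card = k := by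
  have hi'n : i' ∉ stdSet m k h := by rw [mem_stdSet]; omega
  have hiA : i ∈ stdSet m k h ∪ {i'} :=
    Finset.mem_union_left _ ((mem_stdSet m k h i).mpr hi)
  rw [Finset.card_erase_of_mem hiA,
    Finset.card_union_of_disjoint (by simpa [Finset.disjoint_singleton_right] using hi'n),
    stdSet_card, Finset.card_singleton]
  rfl

/-! ### Auxiliary lemmas -/

section ExteriorAux

variable {R M : Type*} [CommRing R] [AddCommGroup M] [Module R M]

theorem aux_prod_mul_ι (L : List M) (v : M) :
    (L.map (ExteriorAlgebra.ι R)).prod * ExteriorAlgebra.ι R v =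
      ((-1 : R) ^ L.length) • (ExteriorAlgebra.ι R v * (L.map (ExteriorAlgebra.ι R)).prod) := by
  induction L with
  | nil => simp
  | cons a L ih =>
    have hsw : ExteriorAlgebra.ι R a * ExteriorAlgebra.ι R v =
        -(ExteriorAlgebra.ι R v * ExteriorAlgebra.ι R a) :=
      eq_neg_of_add_eq_zero_left (ExteriorAlgebra.ι_add_mul_swap a v)
    rw [List.map_cons, List.prod_cons, List.length_cons, mul_assoc, ih, mul_smul_comm,
      ← mul_assoc, hsw, neg_mul, smul_neg, mul_assoc, pow_succ, mul_comm ((-1 : R) ^ L.length),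
      mul_smul, neg_one_smul]

theorem aux_prod_mul_ι_of_mem {α : Type*} (f : α → M) (L : List α) (x : α) (hx : x ∈ L) :
    (L.map fun a => ExteriorAlgebra.ι R (f a)).prod * ExteriorAlgebra.ι R (f x) = 0 := by
  induction L with
  | nil => simp at hx
  | cons a L ih =>
    rw [List.map_cons, List.prod_cons, mul_assoc]
    rcases List.mem_cons.mp hx with rfl | hmem
    · have hL : (L.map fun a => ExteriorAlgebra.ι R (f a)).prod =
          ((L.map f).map (ExteriorAlgebra.ι R)).prod := by rw [List.map_map]; rfl
      rw [hL, aux_prod_mul_ι, mul_smul_comm, ← mul_assoc, ExteriorAlgebra.ι_sq_zero, zero_mul,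
        smul_zero]
    · rw [ih hmem, mul_zero]

end ExteriorAux

theorem aux_pderiv_det_zero {σ K : Type*} [CommRing K] (s : σ) {n : ℕ}
    (N : Matrix (Fin n) (Fin n) (MvPolynomial σ K))
    (h : ∀ a b, MvPolynomial.pderiv s (N a b) = 0) :
    MvPolynomial.pderiv s N.det = 0 := by
  classical
  rw [Matrix.det_apply', map_sum]
  refine Finset.sum_eq_zero fun σp _ => ?_
  have hprod : MvPolynomial.pderiv s (∏ i, N (σp i) i) = 0 :=
    Finset.prod_induction _ (fun p => MvPolynomial.pderiv s p = 0)
      (fun p q hp hq => by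
        rw [MvPolynomial.pderiv_mul, hp, hq, mul_zero, zero_mul, add_zero])
      MvPolynomial.pderiv_one (fun i _ => h _ _)
  have hε : MvPolynomial.pderiv s
      (((Equiv.Perm.sign σp : ℤ) : MvPolynomial σ K)) = 0 := by
    rw [← map_intCast (MvPolynomial.C : K →+* MvPolynomial σ K)]
    exact MvPolynomial.pderiv_C
  rw [MvPolynomial.pderiv_mul, hprod, hε, zero_mul, mul_zero, add_zero]

theorem aux_neg_one_pow_C {σ K : Type*} [CommRing K] (e : ℕ) :
    ((-1 : MvPolynomial σ K) ^ e) = MvPolynomial.C ((-1 : K) ^ e) := by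
  rw [map_pow, map_neg, map_one]

theorem aux_pderiv_det_X {K : Type*} [Field K] {m r : ℕ} (fA fB : Fin (r + 1) → Fin m)
    (hA : Function.Injective fA) (hB : Function.Injective fB) (a0 b0 : Fin (r + 1)) :
    MvPolynomial.pderiv (fA a0, fB b0)
        (Matrix.of fun a b : Fin (r + 1) =>
          (MvPolynomial.X (fA a, fB b) : MvPolynomial (Fin m × Fin m) K)).det =
      (-1) ^ ((a0 : ℕ) + (b0 : ℕ)) *
        (Matrix.of fun a b : Fin r =>
          (MvPolynomial.X (fA (a0.succAbove a), fB (b0.succAbove b)) :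
            MvPolynomial (Fin m × Fin m) K)).det := by
  classical
  rw [Matrix.det_succ_row _ a0, map_sum]
  have hsub : ∀ b : Fin (r + 1),
      MvPolynomial.pderiv (fA a0, fB b0)
        ((Matrix.of fun a c : Fin (r + 1) =>
          (MvPolynomial.X (fA a, fB c) : MvPolynomial (Fin m × Fin m) K)).submatrix
            a0.succAbove b.succAbove).det = 0 := by
    intro b
    refine aux_pderiv_det_zero _ _ fun a c => ?_
    exact MvPolynomial.pderiv_X_of_ne
      (fun hc => Fin.succAbove_ne a0 a (hA (congrArg Prod.fst hc)))
  rw [Finset.sum_eq_single_of_mem b0 (Finset.mem_univ _)]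
  · rw [MvPolynomial.pderiv_mul, hsub b0, mul_zero, add_zero, MvPolynomial.pderiv_mul,
      aux_neg_one_pow_C, MvPolynomial.pderiv_C, zero_mul, zero_add, Matrix.of_apply,
      MvPolynomial.pderiv_X_self, mul_one, ← aux_neg_one_pow_C]
    rfl
  · intro b _ hb
    rw [MvPolynomial.pderiv_mul, hsub b, mul_zero, add_zero, MvPolynomial.pderiv_mul,
      aux_neg_one_pow_C, MvPolynomial.pderiv_C, zero_mul, zero_add, Matrix.of_apply,
      MvPolynomial.pderiv_X_of_ne (fun hc => hb (hB (congrArg Prod.snd hc))), mul_zero, zero_mul]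

theorem aux_orderEmbOfFin_erase {m r : ℕ} (A : Finset (Fin m)) (hA : A.card = r + 1)
    (a0 : Fin (r + 1)) (h' : (A.erase (A.orderEmbOfFin hA a0)).card = r) (x : Fin r) :
    (A.erase (A.orderEmbOfFin hA a0)).orderEmbOfFin h' x =
      A.orderEmbOfFin hA (a0.succAbove x) := by
  have hmem : ∀ y : Fin r,
      A.orderEmbOfFin hA (a0.succAbove y) ∈ A.erase (A.orderEmbOfFin hA a0) := by
    intro y
    refine Finset.mem_erase.mpr ⟨?_, Finset.orderEmbOfFin_mem _ _ _⟩
    exact fun hc => Fin.succAbove_ne a0 y ((A.orderEmbOfFin hA).injective hc)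
  have hmono : StrictMono fun y : Fin r => A.orderEmbOfFin hA (a0.succAbove y) :=
    (A.orderEmbOfFin hA).strictMono.comp (Fin.strictMono_succAbove a0)
  exact (congrFun (Finset.orderEmbOfFin_unique h' hmem hmono) x).symm

theorem genMinor_congr (K : Type*) [Field K] (m r : ℕ) {A A' B B' : Finset (Fin m)}
    (hAA : A = A') (hBB : B = B') (hA : A.card = r) (hA' : A'.card = r)
    (hB : B.card = r) (hB' : B'.card = r) :
    genMinor K m r A B hA hB = genMinor K m r A' B' hA' hB' := by
  subst hAA; subst hBB; rfl

theorem genMinor_eq (K : Type*) [Field K] (m r : ℕ) (A B : Finset (Fin m))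
    (hA : A.card = r) (hB : B.card = r) :
    genMinor K m r A B hA hB = (Matrix.of fun a b : Fin r =>
      (MvPolynomial.X (A.orderEmbOfFin hA a, B.orderEmbOfFin hB b) :
        MvPolynomial (Fin m × Fin m) K)).det := by
  unfold genMinor
  simp only [Finset.coe_orderIsoOfFin_apply]

theorem aux_card_union {m k : ℕ} (h : k ≤ m) (x : Fin m) (hx : k ≤ (x : ℕ)) :
    (stdSet m k h ∪ {x}).card = k + 1 := by
  have hx' : x ∉ stdSet m k h := by rw [mem_stdSet]; omega
  rw [Finset.card_union_of_disjoint (Finset.disjoint_singleton_right.mpr hx'), stdSet_card,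
    Finset.card_singleton]

theorem aux_orderEmb_union {m k : ℕ} (hkm : k < m) (x : Fin m) (hx : k ≤ (x : ℕ))
    (hA : (stdSet m k hkm.le ∪ {x}).card = k + 1) (t : Fin (k + 1)) :
    (stdSet m k hkm.le ∪ {x}).orderEmbOfFin hA t =
      if h : (t : ℕ) < k then (⟨(t : ℕ), h.trans hkm⟩ : Fin m) else x := by
  have hmem : ∀ t : Fin (k + 1),
      (if h : (t : ℕ) < k then (⟨(t : ℕ), h.trans hkm⟩ : Fin m) else x) ∈
        stdSet m k hkm.le ∪ {x} := by
    intro t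
    by_cases h : (t : ℕ) < k
    · rw [dif_pos h]; exact Finset.mem_union_left _ ((mem_stdSet _ _ _ _).mpr h)
    · rw [dif_neg h]; exact Finset.mem_union_right _ (Finset.mem_singleton_self x)
  have hmono : StrictMono fun t : Fin (k + 1) =>
      (if h : (t : ℕ) < k then (⟨(t : ℕ), h.trans hkm⟩ : Fin m) else x) := by
    intro t1 t2 hlt
    have hv : (t1 : ℕ) < (t2 : ℕ) := hlt
    by_cases h1 : (t1 : ℕ) < k
    · by_cases h2 : (t2 : ℕ) < k
      · simp only [dif_pos h1, dif_pos h2, Fin.mk_lt_mk]; exact hv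
      · simp only [dif_pos h1, dif_neg h2, Fin.lt_def]; omega
    · exact absurd hv (by have := t2.isLt; omega)
  exact (congrFun (Finset.orderEmbOfFin_unique hA hmem hmono) t).symm

theorem aux_erase_union {m k : ℕ} (h : k ≤ m) (x : Fin m) (hx : k ≤ (x : ℕ)) :
    (stdSet m k h ∪ {x}).erase x = stdSet m k h := by
  have hx' : x ∉ stdSet m k h := by rw [mem_stdSet]; omega
  ext y
  simp only [Finset.mem_erase, Finset.mem_union, Finset.mem_singleton]
  constructor
  · rintro ⟨hne, h | h⟩
    · exact h
    · exact absurd h hne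
  · intro h
    exact ⟨fun hc => hx' (hc ▸ h), Or.inl h⟩

set_option synthInstance.maxHeartbeats 4000000 in
set_option maxHeartbeats 16000000 in
theorem aux_D_mk_eq_sum (K : Type*) [Field K] (m k : ℕ) (p : MvPolynomial (Fin m × Fin m) K) :
    KaehlerDifferential.D K (DetRing K m k) (Ideal.Quotient.mk (detIdeal K m (k + 1)) p) =
      ∑ s : Fin m × Fin m,
        Ideal.Quotient.mk (detIdeal K m (k + 1)) (MvPolynomial.pderiv s p) •
          KaehlerDifferential.D K (DetRing K m k)
            (Ideal.Quotient.mk (detIdeal K m (k + 1)) (MvPolynomial.X s)) := by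
  classical
  let ω : Fin m × Fin m → KaehlerDifferential K (DetRing K m k) := fun s =>
    KaehlerDifferential.D K (DetRing K m k)
      (Ideal.Quotient.mk (detIdeal K m (k + 1)) (MvPolynomial.X s))
  let d₁ : Derivation K (MvPolynomial (Fin m × Fin m) K)
      (KaehlerDifferential K (DetRing K m k)) :=
    { toLinearMap := (KaehlerDifferential.D K (DetRing K m k)).toLinearMap.comp
        (Ideal.Quotient.mkₐ K (detIdeal K m (k + 1))).toLinearMap
      map_one_eq_zero' := by
        simp only [LinearMap.comp_apply, AlgHom.toLinearMap_apply, map_one,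
          Derivation.coeFn_coe, Derivation.map_one_eq_zero]
      leibniz' := fun a b => by
        simp only [LinearMap.comp_apply, AlgHom.toLinearMap_apply, map_mul,
          Derivation.coeFn_coe, Derivation.leibniz]
        rfl }
  let d₂ : Derivation K (MvPolynomial (Fin m × Fin m) K)
      (KaehlerDifferential K (DetRing K m k)) :=
    ∑ s : Fin m × Fin m,
      (LinearMap.toSpanSingleton _ _ (ω s)).compDer (MvPolynomial.pderiv s)
  have hsum_apply : ∀ (t : Finset (Fin m × Fin m)) (q : MvPolynomial (Fin m × Fin m) K),
      (∑ s ∈ t, (LinearMap.toSpanSingleton (MvPolynomial (Fin m × Fin m) K) _ (ω s)).compDer (MvPolynomial.pderiv s)) q =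
        ∑ s ∈ t, MvPolynomial.pderiv s q • ω s := by
    intro t q
    induction t using Finset.cons_induction with
    | empty => simp
    | cons a t ha ih =>
      rw [Finset.sum_cons, Finset.sum_cons, Derivation.add_apply, ih]
      congr 1
  have hext : d₁ = d₂ := by
    refine MvPolynomial.derivation_ext fun t => ?_
    show KaehlerDifferential.D K (DetRing K m k)
        (Ideal.Quotient.mk (detIdeal K m (k + 1)) (MvPolynomial.X t)) = d₂ (MvPolynomial.X t)
    rw [show (d₂ : MvPolynomial (Fin m × Fin m) K → _) (MvPolynomial.X t) =
        ∑ s : Fin m × Fin m, MvPolynomial.pderiv s (MvPolynomial.X t) • ω s from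
      hsum_apply Finset.univ (MvPolynomial.X t)]
    rw [Finset.sum_eq_single t
      (fun s _ hst => by rw [MvPolynomial.pderiv_X_of_ne (Ne.symm hst), zero_smul])
      (fun ht => absurd (Finset.mem_univ t) ht)]
    rw [MvPolynomial.pderiv_X_self, one_smul]
  have hfin : d₁ p = d₂ p := by rw [hext]
  calc KaehlerDifferential.D K (DetRing K m k) (Ideal.Quotient.mk (detIdeal K m (k + 1)) p)
      = d₁ p := rfl
    _ = d₂ p := hfin
    _ = ∑ s : Fin m × Fin m, MvPolynomial.pderiv s p • ω s := hsum_apply Finset.univ p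
    _ = _ := rfl

set_option synthInstance.maxHeartbeats 1000000 in
set_option maxHeartbeats 4000000 in
theorem aux_zero_smul (K : Type*) [Field K] (m k : ℕ)
    (x : ExteriorAlgebra (DetRing K m k) (KaehlerDifferential K (DetRing K m k))) :
    (0 : DetRing K m k) • x = 0 := zero_smul (DetRing K m k) x

set_option synthInstance.maxHeartbeats 1000000 in
set_option maxHeartbeats 4000000 in
theorem aux_neg_smul (K : Type*) [Field K] (m k : ℕ) (c : DetRing K m k)
    (x : ExteriorAlgebra (DetRing K m k) (KaehlerDifferential K (DetRing K m k))) :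
    (-c) • x = -(c • x) := neg_smul c x

set_option synthInstance.maxHeartbeats 1000000 in
set_option maxHeartbeats 4000000 in
theorem aux_neg_one_zsmul (K : Type*) [Field K] (m k : ℕ)
    (x : ExteriorAlgebra (DetRing K m k) (KaehlerDifferential K (DetRing K m k))) :
    (-1 : ℤ) • x = -x := neg_one_zsmul x

set_option synthInstance.maxHeartbeats 1000000 in
set_option maxHeartbeats 4000000 in
theorem aux_one_zsmul (K : Type*) [Field K] (m k : ℕ)
    (x : ExteriorAlgebra (DetRing K m k) (KaehlerDifferential K (DetRing K m k))) :
    (1 : ℤ) • x = x := one_zsmul x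

set_option synthInstance.maxHeartbeats 4000000 in
set_option maxHeartbeats 16000000 in
/-- the one-row exchange relation between local canonical forms on the
determinantal ring.  Here `A = {1,…,k} ∪ {i'}`, `B = {1,…,k} ∪ {j}`, and `Λ` is the
lexicographically ordered exterior product of the `d[x_{pq}]` over
`(p,q) ∈ A×B ∖ {(i,j), (i',j)}`. -/
theorem statement3 (K : Type*) [Field K] (m k : ℕ) (hk : 1 ≤ k) (hkm : k < m)
    (i i' j : Fin m) (hi : (i : ℕ) < k) (hi' : k ≤ (i' : ℕ)) (hj : k ≤ (j : ℕ)) :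
    ∃ ε : ℤ, (ε = 1 ∨ ε = -1) ∧
      Ideal.Quotient.mk (detIdeal K m (k + 1))
          (genMinor K m k ((stdSet m k hkm.le ∪ {i'}).erase i) (stdSet m k hkm.le)
            (eraseCard m k hkm.le i i' hi hi') (stdSet_card m k hkm.le)) •
        (dWedge K m k
            (((stdSet m k hkm.le ∪ {i'}) ×ˢ (stdSet m k hkm.le ∪ {j})) \ {(i, j), (i', j)}) *
          ExteriorAlgebra.ι (DetRing K m k)
            ((KaehlerDifferential.D K (DetRing K m k))
              (Ideal.Quotient.mk (detIdeal K m (k + 1)) (X (i, j)))))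
      = ε •
        (Ideal.Quotient.mk (detIdeal K m (k + 1))
            (genMinor K m k (stdSet m k hkm.le) (stdSet m k hkm.le)
              (stdSet_card m k hkm.le) (stdSet_card m k hkm.le)) •
          (dWedge K m k
              (((stdSet m k hkm.le ∪ {i'}) ×ˢ (stdSet m k hkm.le ∪ {j})) \ {(i, j), (i', j)}) *
            ExteriorAlgebra.ι (DetRing K m k)
              ((KaehlerDifferential.D K (DetRing K m k))
                (Ideal.Quotient.mk (detIdeal K m (k + 1)) (X (i', j)))))) := by
  classical
  have hAcard : (stdSet m k hkm.le ∪ {i'}).card = k + 1 := aux_card_union hkm.le i' hi'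
  have hBcard : (stdSet m k hkm.le ∪ {j}).card = k + 1 := aux_card_union hkm.le j hj
  have hΔ0 : Ideal.Quotient.mk (detIdeal K m (k + 1))
      (genMinor K m (k + 1) (stdSet m k hkm.le ∪ {i'}) (stdSet m k hkm.le ∪ {j})
        hAcard hBcard) = 0 :=
    Ideal.Quotient.eq_zero_iff_mem.mpr
      (Ideal.subset_span ⟨stdSet m k hkm.le ∪ {i'}, stdSet m k hkm.le ∪ {j}, hAcard, hBcard, rfl⟩)
  have hTS : ∀ s ∈ ((stdSet m k hkm.le ∪ {i'}) ×ˢ (stdSet m k hkm.le ∪ {j})) \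
      ({((i : Fin m), j), (i', j)} : Finset (Fin m × Fin m)),
      dWedge K m k (((stdSet m k hkm.le ∪ {i'}) ×ˢ (stdSet m k hkm.le ∪ {j})) \ {(i, j), (i', j)}) *
        ExteriorAlgebra.ι (DetRing K m k)
          (KaehlerDifferential.D K (DetRing K m k)
            (Ideal.Quotient.mk (detIdeal K m (k + 1)) (MvPolynomial.X s))) = 0 := by
    intro s hs
    have hmem : toLex s ∈
        (((((stdSet m k hkm.le ∪ {i'}) ×ˢ (stdSet m k hkm.le ∪ {j})) \
          {(i, j), (i', j)}).map toLex.toEmbedding).sort (· ≤ ·)) :=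
      (Finset.mem_sort _).mpr ((Finset.mem_map' _).mpr hs)
    exact aux_prod_mul_ι_of_mem
      (fun p : Lex (Fin m × Fin m) =>
        KaehlerDifferential.D K (DetRing K m k)
          (Ideal.Quotient.mk (detIdeal K m (k + 1)) (MvPolynomial.X (ofLex p))))
      _ (toLex s) hmem
  have hzero : (∑ s : Fin m × Fin m,
      Ideal.Quotient.mk (detIdeal K m (k + 1))
          (MvPolynomial.pderiv s (genMinor K m (k + 1) (stdSet m k hkm.le ∪ {i'})
            (stdSet m k hkm.le ∪ {j}) hAcard hBcard)) •
        (dWedge K m k (((stdSet m k hkm.le ∪ {i'}) ×ˢ (stdSet m k hkm.le ∪ {j})) \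
            {(i, j), (i', j)}) *
          ExteriorAlgebra.ι (DetRing K m k)
            (KaehlerDifferential.D K (DetRing K m k)
              (Ideal.Quotient.mk (detIdeal K m (k + 1)) (MvPolynomial.X s))))) = 0 := by
    have hD : dWedge K m k (((stdSet m k hkm.le ∪ {i'}) ×ˢ (stdSet m k hkm.le ∪ {j})) \
          {(i, j), (i', j)}) *
        ExteriorAlgebra.ι (DetRing K m k)
          (KaehlerDifferential.D K (DetRing K m k)
            (Ideal.Quotient.mk (detIdeal K m (k + 1))
              (genMinor K m (k + 1) (stdSet m k hkm.le ∪ {i'}) (stdSet m k hkm.le ∪ {j})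
                hAcard hBcard))) = 0 := by
      rw [hΔ0, map_zero, map_zero, mul_zero]
    rw [← hD, aux_D_mk_eq_sum, map_sum, Finset.mul_sum]
    exact Finset.sum_congr rfl fun s _ => by rw [map_smul]; exact (Algebra.mul_smul_comm (R := DetRing K m k)
      (A := ExteriorAlgebra (DetRing K m k) (KaehlerDifferential K (DetRing K m k))) _ _ _).symm
  have hpair : (((i : Fin m), j) : Fin m × Fin m) ≠ (i', j) := by
    intro hc
    have h2 : i = i' := congrArg Prod.fst hc
    have h3 := congrArg Fin.val h2
    omega
  have hvanish : ∀ s : Fin m × Fin m,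
      s ∉ ({((i : Fin m), j), (i', j)} : Finset (Fin m × Fin m)) →
      Ideal.Quotient.mk (detIdeal K m (k + 1))
          (MvPolynomial.pderiv s (genMinor K m (k + 1) (stdSet m k hkm.le ∪ {i'})
            (stdSet m k hkm.le ∪ {j}) hAcard hBcard)) •
        (dWedge K m k (((stdSet m k hkm.le ∪ {i'}) ×ˢ (stdSet m k hkm.le ∪ {j})) \
            {(i, j), (i', j)}) *
          ExteriorAlgebra.ι (DetRing K m k)
            (KaehlerDifferential.D K (DetRing K m k)
              (Ideal.Quotient.mk (detIdeal K m (k + 1)) (MvPolynomial.X s)))) = 0 := by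
    intro s hs
    by_cases hsAB : s ∈ (stdSet m k hkm.le ∪ {i'}) ×ˢ (stdSet m k hkm.le ∪ {j})
    · rw [hTS s (Finset.mem_sdiff.mpr ⟨hsAB, hs⟩), smul_zero]
    · have hz : MvPolynomial.pderiv s (genMinor K m (k + 1) (stdSet m k hkm.le ∪ {i'})
          (stdSet m k hkm.le ∪ {j}) hAcard hBcard) = 0 := by
        rw [genMinor_eq]
        refine aux_pderiv_det_zero _ _ fun a b => ?_
        simp only [Matrix.of_apply]
        refine MvPolynomial.pderiv_X_of_ne fun hc => hsAB ?_
        rw [← hc]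
        exact Finset.mem_product.mpr
          ⟨Finset.orderEmbOfFin_mem _ _ _, Finset.orderEmbOfFin_mem _ _ _⟩
      rw [hz, map_zero]
      exact aux_zero_smul K m k _
  rw [← Finset.sum_subset
      (Finset.subset_univ ({((i : Fin m), j), (i', j)} : Finset (Fin m × Fin m)))
      (fun s _ hs => hvanish s hs), Finset.sum_pair hpair] at hzero
  -- cofactor identification
  have ha0lt : (i : ℕ) < k + 1 := by omega
  have hfAa0 : (stdSet m k hkm.le ∪ {i'}).orderEmbOfFin hAcard ⟨(i : ℕ), ha0lt⟩ = i := by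
    rw [aux_orderEmb_union hkm i' hi' hAcard, dif_pos (show ((i : ℕ)) < k from hi)]
  have hfAlast : (stdSet m k hkm.le ∪ {i'}).orderEmbOfFin hAcard (Fin.last k) = i' := by
    rw [aux_orderEmb_union hkm i' hi' hAcard, dif_neg (by simp)]
  have hfBlast : (stdSet m k hkm.le ∪ {j}).orderEmbOfFin hBcard (Fin.last k) = j := by
    rw [aux_orderEmb_union hkm j hj hBcard, dif_neg (by simp)]
  have hcard1 : ((stdSet m k hkm.le ∪ {i'}).erase
      ((stdSet m k hkm.le ∪ {i'}).orderEmbOfFin hAcard ⟨(i : ℕ), ha0lt⟩)).card = k := by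
    rw [hfAa0]
    exact eraseCard m k hkm.le i i' hi hi'
  have hcard1' : ((stdSet m k hkm.le ∪ {i'}).erase
      ((stdSet m k hkm.le ∪ {i'}).orderEmbOfFin hAcard (Fin.last k))).card = k := by
    rw [hfAlast, aux_erase_union hkm.le i' hi']
    exact stdSet_card m k hkm.le
  have hcard2 : ((stdSet m k hkm.le ∪ {j}).erase
      ((stdSet m k hkm.le ∪ {j}).orderEmbOfFin hBcard (Fin.last k))).card = k := by
    rw [hfBlast, aux_erase_union hkm.le j hj]
    exact stdSet_card m k hkm.le
  have hpd1 : MvPolynomial.pderiv ((i : Fin m), j)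
      (genMinor K m (k + 1) (stdSet m k hkm.le ∪ {i'}) (stdSet m k hkm.le ∪ {j})
        hAcard hBcard)
      = (-1) ^ ((i : ℕ) + k) *
        genMinor K m k ((stdSet m k hkm.le ∪ {i'}).erase i) (stdSet m k hkm.le)
          (eraseCard m k hkm.le i i' hi hi') (stdSet_card m k hkm.le) := by
    rw [genMinor_eq,
      show (((i : Fin m), j) : Fin m × Fin m) =
        ((stdSet m k hkm.le ∪ {i'}).orderEmbOfFin hAcard ⟨(i : ℕ), ha0lt⟩,
         (stdSet m k hkm.le ∪ {j}).orderEmbOfFin hBcard (Fin.last k)) from by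
        rw [hfAa0, hfBlast],
      aux_pderiv_det_X _ _ ((stdSet m k hkm.le ∪ {i'}).orderEmbOfFin hAcard).injective
        ((stdSet m k hkm.le ∪ {j}).orderEmbOfFin hBcard).injective ⟨(i : ℕ), ha0lt⟩
        (Fin.last k)]
    have h2 : genMinor K m k ((stdSet m k hkm.le ∪ {i'}).erase i) (stdSet m k hkm.le)
        (eraseCard m k hkm.le i i' hi hi') (stdSet_card m k hkm.le)
        = (Matrix.of fun a b : Fin k =>
            (MvPolynomial.X
              ((stdSet m k hkm.le ∪ {i'}).orderEmbOfFin hAcard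
                ((⟨(i : ℕ), ha0lt⟩ : Fin (k + 1)).succAbove a),
               (stdSet m k hkm.le ∪ {j}).orderEmbOfFin hBcard
                ((Fin.last k).succAbove b)) : MvPolynomial (Fin m × Fin m) K)).det := by
      rw [genMinor_congr K m k
          (show (stdSet m k hkm.le ∪ {i'}).erase i = (stdSet m k hkm.le ∪ {i'}).erase
            ((stdSet m k hkm.le ∪ {i'}).orderEmbOfFin hAcard ⟨(i : ℕ), ha0lt⟩) from by
              rw [hfAa0])
          (show stdSet m k hkm.le = (stdSet m k hkm.le ∪ {j}).erase
            ((stdSet m k hkm.le ∪ {j}).orderEmbOfFin hBcard (Fin.last k)) from by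
              rw [hfBlast]; exact (aux_erase_union hkm.le j hj).symm)
          _ hcard1 _ hcard2, genMinor_eq]
      congr 1
      ext a b
      rw [Matrix.of_apply, Matrix.of_apply, aux_orderEmbOfFin_erase, aux_orderEmbOfFin_erase]
    rw [h2]
    rfl
  have hpd2 : MvPolynomial.pderiv ((i' : Fin m), j)
      (genMinor K m (k + 1) (stdSet m k hkm.le ∪ {i'}) (stdSet m k hkm.le ∪ {j})
        hAcard hBcard)
      = (-1) ^ (k + k) *
        genMinor K m k (stdSet m k hkm.le) (stdSet m k hkm.le)
          (stdSet_card m k hkm.le) (stdSet_card m k hkm.le) := by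
    rw [genMinor_eq,
      show (((i' : Fin m), j) : Fin m × Fin m) =
        ((stdSet m k hkm.le ∪ {i'}).orderEmbOfFin hAcard (Fin.last k),
         (stdSet m k hkm.le ∪ {j}).orderEmbOfFin hBcard (Fin.last k)) from by
        rw [hfAlast, hfBlast],
      aux_pderiv_det_X _ _ ((stdSet m k hkm.le ∪ {i'}).orderEmbOfFin hAcard).injective
        ((stdSet m k hkm.le ∪ {j}).orderEmbOfFin hBcard).injective (Fin.last k) (Fin.last k)]
    have h2 : genMinor K m k (stdSet m k hkm.le) (stdSet m k hkm.le)
        (stdSet_card m k hkm.le) (stdSet_card m k hkm.le)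
        = (Matrix.of fun a b : Fin k =>
            (MvPolynomial.X
              ((stdSet m k hkm.le ∪ {i'}).orderEmbOfFin hAcard ((Fin.last k).succAbove a),
               (stdSet m k hkm.le ∪ {j}).orderEmbOfFin hBcard
                ((Fin.last k).succAbove b)) : MvPolynomial (Fin m × Fin m) K)).det := by
      rw [genMinor_congr K m k
          (show stdSet m k hkm.le = (stdSet m k hkm.le ∪ {i'}).erase
            ((stdSet m k hkm.le ∪ {i'}).orderEmbOfFin hAcard (Fin.last k)) from by
              rw [hfAlast]; exact (aux_erase_union hkm.le i' hi').symm)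
          (show stdSet m k hkm.le = (stdSet m k hkm.le ∪ {j}).erase
            ((stdSet m k hkm.le ∪ {j}).orderEmbOfFin hBcard (Fin.last k)) from by
              rw [hfBlast]; exact (aux_erase_union hkm.le j hj).symm)
          _ hcard1' _ hcard2, genMinor_eq]
      congr 1
      ext a b
      rw [Matrix.of_apply, Matrix.of_apply, aux_orderEmbOfFin_erase, aux_orderEmbOfFin_erase]
    rw [h2]
    rfl
  rw [hpd1, hpd2] at hzero
  have hc1 : Ideal.Quotient.mk (detIdeal K m (k + 1))
      ((-1) ^ ((i : ℕ) + k) *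
        genMinor K m k ((stdSet m k hkm.le ∪ {i'}).erase i) (stdSet m k hkm.le)
          (eraseCard m k hkm.le i i' hi hi') (stdSet_card m k hkm.le))
      = (-1 : DetRing K m k) ^ ((i : ℕ) + k) *
        Ideal.Quotient.mk (detIdeal K m (k + 1))
          (genMinor K m k ((stdSet m k hkm.le ∪ {i'}).erase i) (stdSet m k hkm.le)
            (eraseCard m k hkm.le i i' hi hi') (stdSet_card m k hkm.le)) := by
    rw [map_mul, map_pow, map_neg, map_one]
  have hc2 : Ideal.Quotient.mk (detIdeal K m (k + 1))
      ((-1) ^ (k + k) *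
        genMinor K m k (stdSet m k hkm.le) (stdSet m k hkm.le)
          (stdSet_card m k hkm.le) (stdSet_card m k hkm.le))
      = Ideal.Quotient.mk (detIdeal K m (k + 1))
          (genMinor K m k (stdSet m k hkm.le) (stdSet m k hkm.le)
            (stdSet_card m k hkm.le) (stdSet_card m k hkm.le)) := by
    rw [map_mul, map_pow, map_neg, map_one,
      Even.neg_one_pow (α := DetRing K m k) ⟨k, rfl⟩, one_mul]
  rw [hc1, hc2] at hzero
  rcases Nat.even_or_odd ((i : ℕ) + k) with he | ho
  · rw [Even.neg_one_pow (α := DetRing K m k) he, one_mul] at hzero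
    refine ⟨-1, Or.inr rfl, ?_⟩
    rw [aux_neg_one_zsmul]
    exact eq_neg_of_add_eq_zero_left hzero
  · rw [Odd.neg_one_pow (α := DetRing K m k) ho, neg_one_mul, aux_neg_smul] at hzero
    refine ⟨1, Or.inl rfl, ?_⟩
    rw [aux_one_zsmul]
    exact neg_add_eq_zero.mp hzero
end

section
/- Let K be a field, m ≥ 1, 0 ≤ q ≤ m, and let λ_1 ≥ λ_2 ≥ ⋯ ≥ λ_m be a nonincreasing sequence of elements of ℕ ∪ {∞}. Let δ_λ be the m×m diagonal matrix over the power series ring K⟦t⟧ with diagonal entries t^{λ_1}, …, t^{λ_m}, where t^∞ is interpreted as 0, and let x_q be the m×m diagonal matrix over K whose first m−q diagonal entries are 0 and whose last q diagonal entries are 1. Then there exist invertible matrices g, h ∈ GL_m(K⟦t⟧) such that the matrix obtained from g·δ_λ·h by taking the constant term of each entry equals x_q, if and only if λ_i ≥ 1 for all i ≤ m−q and λ_i = 0 for all i > m−q. -/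
open Matrix

/-- `t^e` in `K⟦t⟧` for an extended natural number `e`, with `t^∞ = 0`. -/
noncomputable def tPow (K : Type*) [Field K] (e : ℕ∞) : PowerSeries K :=
  WithTop.recTopCoe 0 (fun n => (PowerSeries.X : PowerSeries K) ^ n) e

lemma constantCoeff_tPow (K : Type*) [Field K] (e : ℕ∞) :
    PowerSeries.constantCoeff (R := K) (tPow K e) = if e = 0 then 1 else 0 := by
  induction e using ENat.recTopCoe with
  | top =>
    rw [if_neg (by decide), show tPow K ⊤ = 0 from rfl, map_zero]
  | coe n =>
    show PowerSeries.constantCoeff ((PowerSeries.X : PowerSeries K) ^ n) = _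
    cases n with
    | zero => simp
    | succ k =>
      rw [if_neg (by simp)]
      simp [map_pow]

/-- for a nonincreasing extended partition `λ`, the diagonal arc `δ_λ` can be
moved by `GL_m(K⟦t⟧) × GL_m(K⟦t⟧)` to an arc whose constant term is the rank-`q` diagonal
matrix `x_q` if and only if `λ_i ≥ 1` for `i ≤ m−q` and `λ_i = 0` for `i > m−q`. -/
theorem statement8 (K : Type*) [Field K] (m q : ℕ) (hm : 1 ≤ m) (hq : q ≤ m)
    (lam : Fin m → ℕ∞) (hlam : Antitone lam) :
    (∃ g h : GL (Fin m) (PowerSeries K),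
        ((g : Matrix (Fin m) (Fin m) (PowerSeries K)) *
            Matrix.diagonal (fun x : Fin m => tPow K (lam x)) *
            (h : Matrix (Fin m) (Fin m) (PowerSeries K))).map
          (PowerSeries.constantCoeff (R := K)) =
        Matrix.diagonal (fun x : Fin m => if (x : ℕ) < m - q then (0 : K) else 1))
      ↔ ((∀ x : Fin m, (x : ℕ) < m - q → 1 ≤ lam x) ∧
          (∀ x : Fin m, m - q ≤ (x : ℕ) → lam x = 0)) := by
  classical
  set c := PowerSeries.constantCoeff (R := K)
  constructor
  · rintro ⟨g, h, hgh⟩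
    -- pass to ranks
    have hmap : ∀ A B : Matrix (Fin m) (Fin m) (PowerSeries K),
        (A * B).map c = A.map c * B.map c := fun A B => Matrix.map_mul
    have hdiag : (Matrix.diagonal (fun x : Fin m => tPow K (lam x))).map c =
        Matrix.diagonal (fun x : Fin m => c (tPow K (lam x))) :=
      Matrix.diagonal_map (map_zero c)
    have hgu : IsUnit ((g : Matrix (Fin m) (Fin m) (PowerSeries K)).map c).det := by
      have : IsUnit ((g : Matrix (Fin m) (Fin m) (PowerSeries K)).map c) := by
        have := (g : (Matrix (Fin m) (Fin m) (PowerSeries K))ˣ).isUnit.map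
          (c.mapMatrix : Matrix (Fin m) (Fin m) (PowerSeries K) →+* Matrix (Fin m) (Fin m) K)
        simpa [RingHom.mapMatrix_apply] using this
      exact (Matrix.isUnit_iff_isUnit_det _).mp this
    have hhu : IsUnit ((h : Matrix (Fin m) (Fin m) (PowerSeries K)).map c).det := by
      have : IsUnit ((h : Matrix (Fin m) (Fin m) (PowerSeries K)).map c) := by
        have := (h : (Matrix (Fin m) (Fin m) (PowerSeries K))ˣ).isUnit.map
          (c.mapMatrix : Matrix (Fin m) (Fin m) (PowerSeries K) →+* Matrix (Fin m) (Fin m) K)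
        simpa [RingHom.mapMatrix_apply] using this
      exact (Matrix.isUnit_iff_isUnit_det _).mp this
    have hrank : (Matrix.diagonal (fun x : Fin m => c (tPow K (lam x)))).rank =
        (Matrix.diagonal (fun x : Fin m => if (x : ℕ) < m - q then (0 : K) else 1)).rank := by
      rw [← hgh, hmap, hmap, hdiag, Matrix.rank_mul_eq_left_of_isUnit_det _ _ hhu,
        Matrix.rank_mul_eq_right_of_isUnit_det _ _ hgu]
    rw [Matrix.rank_diagonal, Matrix.rank_diagonal] at hrank
    rw [Fintype.card_subtype, Fintype.card_subtype] at hrank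
    have hval : ∀ x : Fin m, (c (tPow K (lam x)) ≠ 0) ↔ lam x = 0 := by
      intro x
      rw [constantCoeff_tPow]
      by_cases hx : lam x = 0 <;> simp [hx]
    have hS : (Finset.univ.filter fun x : Fin m => c (tPow K (lam x)) ≠ 0)
        = Finset.univ.filter fun x : Fin m => lam x = 0 := by
      apply Finset.filter_congr; intro x _; simp [hval x]
    have hT : (Finset.univ.filter fun x : Fin m =>
        (if (x : ℕ) < m - q then (0 : K) else 1) ≠ 0)
        = Finset.univ.filter fun x : Fin m => m - q ≤ (x : ℕ) := by
      apply Finset.filter_congr; intro x _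
      by_cases hx : (x : ℕ) < m - q <;> simp [hx] <;> omega
    rw [hS, hT] at hrank
    -- compute card of right filter = q
    have hTcard : (Finset.univ.filter fun x : Fin m => m - q ≤ (x : ℕ)).card = q := by
      rcases Nat.eq_zero_or_pos q with rfl | hq1
      · rw [Finset.filter_false_of_mem, Finset.card_empty]
        intro x _; simp
      · have hlt : m - q < m := by omega
        have : (Finset.univ.filter fun x : Fin m => m - q ≤ (x : ℕ))
            = Finset.Ici (⟨m - q, hlt⟩ : Fin m) := by
          ext x; simp [Finset.mem_Ici, Fin.le_def]
        rw [this, Fin.card_Ici]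
        simp only [Fin.val_mk]
        try omega
    rw [hTcard] at hrank
    -- hrank : card {x | lam x = 0} = q
    constructor
    · intro i hi
      by_contra hli
      have hli0 : lam i = 0 := by
        rcases eq_or_ne (lam i) 0 with h0 | h0
        · exact h0
        · exact absurd (ENat.one_le_iff_ne_zero.mpr h0) hli
      have hsub : Finset.Ici i ⊆ Finset.univ.filter fun x : Fin m => lam x = 0 := by
        intro j hj
        simp only [Finset.mem_Ici] at hj
        have := hlam hj
        rw [hli0] at this
        simp only [Finset.mem_filter, Finset.mem_univ, true_and]
        exact le_antisymm this zero_le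
      have := Finset.card_le_card hsub
      rw [Fin.card_Ici, hrank] at this
      have := i.isLt
      omega
    · intro i hi
      by_contra hli
      have hsub : (Finset.univ.filter fun x : Fin m => lam x = 0) ⊆ Finset.Ioi i := by
        intro j hj
        simp only [Finset.mem_filter, Finset.mem_univ, true_and] at hj
        simp only [Finset.mem_Ioi]
        by_contra hji
        push_neg at hji
        exact hli (le_antisymm (hj ▸ hlam hji) zero_le)
      have := Finset.card_le_card hsub
      rw [Fin.card_Ioi, hrank] at this
      have := i.isLt
      omega
  · rintro ⟨h1, h2⟩
    refine ⟨1, 1, ?_⟩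
    simp only [Units.val_one, Matrix.one_mul, Matrix.mul_one]
    rw [Matrix.diagonal_map (map_zero c)]
    have hfun : (fun x : Fin m => c (tPow K (lam x)))
        = fun x : Fin m => if (x : ℕ) < m - q then (0 : K) else 1 := by
      funext i
      rw [constantCoeff_tPow]
      by_cases hi : (i : ℕ) < m - q
      · have := h1 i hi
        have hne : lam i ≠ 0 := by
          intro h0; rw [h0] at this; exact absurd this (by simp)
        simp [hne, hi]
      · have := h2 i (by omega)
        simp [this, hi]
    rw [hfun]
end
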